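/- For weight 2, the maximum size of a W-light constant weight code satisfies L(W,n,2) = min(⌊(W+1)n/2⌋, C(n,2)). -/

import Mathlib

def weight {n : ℕ} (B : Fin n → Bool) : ℕ :=
  (Finset.univ.filter (fun i => B i = true)).card

def hamming {n : ℕ} (B B' : Fin n → Bool) : ℕ :=
  (Finset.univ.filter (fun i => B i ≠ B' i)).card

theorem hamming_comm {n : ℕ} (B B' : Fin n → Bool) : hamming B B' = hamming B' B := by
  unfold hamming; congr 1; ext i; simp [ne_comm]

def johnson (n w : ℕ) : SimpleGraph {B : Fin n → Bool // weight B = w} where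
  Adj B B' := hamming B.1 B'.1 = 2
  symm := ⟨fun B B' h => by show hamming B'.1 B.1 = 2; rw [hamming_comm]; exact h⟩
  loopless := ⟨fun B h => by simp [hamming] at h⟩

structure GraphOrientation {V : Type*} (G : SimpleGraph V) where
  dir : V → V → Prop
  dir_adj : ∀ u v, dir u v → G.Adj u v
  total : ∀ u v, G.Adj u v → dir u v ∨ dir v u
  asymm : ∀ u v, dir u v → ¬ dir v u

noncomputable def outdeg {V : Type*} {G : SimpleGraph V} (Λ : GraphOrientation G) (v : V) : ℕ :=
  {u | Λ.dir v u}.ncard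

noncomputable def Lmax (W n w : ℕ) : ℕ :=
  sSup {k | ∃ Λ : GraphOrientation (johnson n w), k = {B | outdeg Λ B ≤ W}.ncard}

/- ### helpers -/
open Finset

abbrev Vtx (n : ℕ) := {B : Fin n → Bool // weight B = 2}

def pf (n a b : ℕ) : Fin n → Bool := fun i => decide (i.val = a ∨ i.val = b)

lemma pf_true_iff {n a b : ℕ} (i : Fin n) : pf n a b i = true ↔ (i.val = a ∨ i.val = b) := by
  simp [pf]

lemma weight_pf {n a b : ℕ} (hab : a ≠ b) (ha : a < n) (hb : b < n) : weight (pf n a b) = 2 := by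
  unfold weight
  have : (Finset.univ.filter (fun i => pf n a b i = true)) = {⟨a, ha⟩, ⟨b, hb⟩} := by
    ext i
    simp [pf, Fin.ext_iff]
  rw [this, card_insert_of_notMem (by simp [Fin.ext_iff, hab]), card_singleton]

lemma exists_pair {n : ℕ} (e : Vtx n) :
    ∃ u w : Fin n, u ≠ w ∧ ∀ i, (e.1 i = true ↔ i = u ∨ i = w) := by
  have h2 : (Finset.univ.filter (fun i => e.1 i = true)).card = 2 := e.2
  obtain ⟨u, w, huw, hset⟩ := Finset.card_eq_two.1 h2
  refine ⟨u, w, huw, fun i => ?_⟩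
  constructor
  · intro hi
    have : i ∈ ({u, w} : Finset (Fin n)) := hset ▸ (by simp [hi])
    simpa using this
  · intro hi
    have : i ∈ (Finset.univ.filter (fun i => e.1 i = true)) := by
      rw [hset]; simpa using hi
    simpa using this

lemma eq_pf_of {n : ℕ} (e : Vtx n) {u w : Fin n} (huw : u ≠ w)
    (hu : e.1 u = true) (hw : e.1 w = true) : e.1 = pf n u.val w.val := by
  obtain ⟨x, y, hxy, hchar⟩ := exists_pair e
  have hchar' : ∀ i, (e.1 i = true ↔ i = u ∨ i = w) := by
    rcases (hchar u).1 hu with hu' | hu' <;> rcases (hchar w).1 hw with hw' | hw'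
    · exact absurd (hu'.trans hw'.symm) huw
    · intro i; rw [hchar i, hu', hw']
    · intro i; rw [hchar i, hu', hw']; tauto
    · exact absurd (hu'.trans hw'.symm) huw
  funext i
  have := hchar' i
  rcases h : e.1 i with _ | _
  · rw [h] at this
    simp only [pf, decide_eq_true_eq]
    symm; rw [decide_eq_false_iff_not]
    simp only [Bool.false_eq_true, false_iff, not_or] at this
    push_neg
    exact ⟨fun hv => this.1 (Fin.ext hv), fun hv => this.2 (Fin.ext hv)⟩
  · rw [h] at this
    have := this.1 rfl
    symm
    rw [pf_true_iff]
    rcases this with h' | h' <;> subst h' <;> simp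

lemma pair_uniq {n : ℕ} (e f : Vtx n) {v v' : Fin n} (hvv : v ≠ v')
    (h1 : e.1 v = true) (h2 : e.1 v' = true) (h3 : f.1 v = true) (h4 : f.1 v' = true) :
    e = f := by
  apply Subtype.ext
  rw [eq_pf_of e hvv h1 h2, eq_pf_of f hvv h3 h4]

lemma johnson_adj {n : ℕ} (e f : Vtx n) :
    (johnson n 2).Adj e f ↔ (e ≠ f ∧ ∃ v, e.1 v = true ∧ f.1 v = true) := by
  constructor
  · intro h
    refine ⟨(johnson n 2).ne_of_adj h, ?_⟩
    by_contra hno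
    push_neg at hno
    have hsub : (Finset.univ.filter (fun i => e.1 i = true)) ∪
        (Finset.univ.filter (fun i => f.1 i = true)) ⊆
        (Finset.univ.filter (fun i => e.1 i ≠ f.1 i)) := by
      intro i hi
      simp only [mem_union, mem_filter, mem_univ, true_and] at hi ⊢
      rcases hi with hi | hi
      · intro hef; exact hno i hi (hef ▸ hi)
      · intro hef; exact hno i (hef ▸ hi) hi
    have hdisj : Disjoint (Finset.univ.filter (fun i => e.1 i = true))
        (Finset.univ.filter (fun i => f.1 i = true)) := by
      rw [Finset.disjoint_left]
      intro i hi1 hi2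
      simp only [mem_filter, mem_univ, true_and] at hi1 hi2
      exact hno i hi1 hi2
    have hcard := Finset.card_le_card hsub
    rw [Finset.card_union_of_disjoint hdisj] at hcard
    have he2 : (Finset.univ.filter (fun i => e.1 i = true)).card = 2 := e.2
    have hf2 : (Finset.univ.filter (fun i => f.1 i = true)).card = 2 := f.2
    have : hamming e.1 f.1 = 2 := h
    unfold hamming at this
    omega
  · rintro ⟨hne, v, hev, hfv⟩
    obtain ⟨x, y, hxy, hche⟩ := exists_pair e
    obtain ⟨x', y', hxy', hchf⟩ := exists_pair f
    -- u : the other element of e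
    obtain ⟨u, hu, huv⟩ : ∃ u, e.1 u = true ∧ u ≠ v := by
      rcases (hche v).1 hev with h | h
      · exact ⟨y, (hche y).2 (Or.inr rfl), by rw [h]; exact hxy.symm⟩
      · exact ⟨x, (hche x).2 (Or.inl rfl), by rw [h]; exact hxy⟩
    obtain ⟨w, hw, hwv⟩ : ∃ w, f.1 w = true ∧ w ≠ v := by
      rcases (hchf v).1 hfv with h | h
      · exact ⟨y', (hchf y').2 (Or.inr rfl), by rw [h]; exact hxy'.symm⟩
      · exact ⟨x', (hchf x').2 (Or.inl rfl), by rw [h]; exact hxy'⟩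
    have huw : u ≠ w := by
      intro h
      exact hne (pair_uniq e f huv hu hev (h ▸ hw) hfv)
    show hamming e.1 f.1 = 2
    unfold hamming
    have hee := eq_pf_of e huv hu hev
    have hff := eq_pf_of f hwv hw hfv
    have : (Finset.univ.filter (fun i => e.1 i ≠ f.1 i)) = {u, w} := by
      ext i
      simp only [mem_filter, mem_univ, true_and, mem_insert, mem_singleton]
      rw [hee, hff]
      by_cases h1 : i = u <;> by_cases h2 : i = w <;> by_cases h3 : i = v <;>
        simp_all [pf, Fin.ext_iff]
    rw [this, card_insert_of_notMem (by simp [huw]), card_singleton]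
/- ### upper bound -/

lemma card_vtx (n : ℕ) : Fintype.card (Vtx n) = n.choose 2 := by
  have e : Vtx n ≃ {s : Finset (Fin n) // s.card = 2} :=
    { toFun := fun B => ⟨Finset.univ.filter (fun i => B.1 i = true), B.2⟩
      invFun := fun s => ⟨fun i => decide (i ∈ s.1), by
        have : (Finset.univ.filter (fun i => decide (i ∈ s.1) = true)) = s.1 := by
          ext i; simp
        unfold weight; rw [this]; exact s.2⟩
      left_inv := fun B => by
        apply Subtype.ext; funext i; simp
      right_inv := fun s => by
        apply Subtype.ext; ext i; simp }
  rw [Fintype.card_congr e, Fintype.card_finset_len, Fintype.card_fin]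

lemma upper_choose {n W : ℕ} (Λ : GraphOrientation (johnson n 2)) :
    {B | outdeg Λ B ≤ W}.ncard ≤ n.choose 2 := by
  classical
  calc {B | outdeg Λ B ≤ W}.ncard ≤ (Set.univ : Set (Vtx n)).ncard :=
        Set.ncard_le_ncard (Set.subset_univ _) (Set.toFinite _)
    _ = Fintype.card (Vtx n) := by rw [Set.ncard_univ, Nat.card_eq_fintype_card]
    _ = n.choose 2 := card_vtx n

lemma upper_main {n W : ℕ} (Λ : GraphOrientation (johnson n 2)) :
    {B | outdeg Λ B ≤ W}.ncard * 2 ≤ (W + 1) * n := by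
  classical
  set S : Finset (Vtx n) := Finset.univ.filter (fun e => outdeg Λ e ≤ W) with hS
  have hset : {B | outdeg Λ B ≤ W} = ↑S := by ext e; simp [hS]
  rw [hset, Set.ncard_coe_finset]
  set m := S.card with hm
  set d : Fin n → ℕ := fun v => (S.filter (fun e => e.1 v = true)).card with hd
  -- sum of degrees
  have hsumd : ∑ v, d v = 2 * m := by
    calc ∑ v, d v = ∑ v : Fin n, ∑ e ∈ S, if e.1 v = true then 1 else 0 := by
          refine Finset.sum_congr rfl fun v _ => ?_
          exact Finset.card_filter _ _
      _ = ∑ e ∈ S, ∑ v : Fin n, if e.1 v = true then 1 else 0 := Finset.sum_comm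
      _ = ∑ e ∈ S, 2 := by
          refine Finset.sum_congr rfl fun e he => ?_
          rw [← Finset.card_filter]; exact e.2
      _ = 2 * m := by rw [Finset.sum_const, smul_eq_mul, mul_comm]
  set A : Finset (Vtx n × Vtx n) := (S ×ˢ S).filter (fun p => (johnson n 2).Adj p.1 p.2) with hA
  set P : Finset (Vtx n × Vtx n) := (S ×ˢ S).filter (fun p => Λ.dir p.1 p.2) with hP
  have h2a : ∑ v, d v * (d v - 1) ≤ A.card := by
    have hdisj : ∀ x ∈ (Finset.univ : Finset (Fin n)), ∀ y ∈ Finset.univ, x ≠ y →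
        Disjoint ((S.filter (fun e => e.1 x = true)).offDiag)
          ((S.filter (fun e => e.1 y = true)).offDiag) := by
      intro x _ y _ hxy
      rw [Finset.disjoint_left]
      rintro ⟨p1, p2⟩ hp hq
      rw [Finset.mem_offDiag] at hp hq
      obtain ⟨hp1, hp2, hpne⟩ := hp
      obtain ⟨hq1, hq2, _⟩ := hq
      simp only [Finset.mem_filter] at hp1 hp2 hq1 hq2
      exact hpne (pair_uniq p1 p2 hxy hp1.2 hq1.2 hp2.2 hq2.2)
    calc ∑ v, d v * (d v - 1)
        = ∑ v, ((S.filter (fun e => e.1 v = true)).offDiag).card := by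
          refine Finset.sum_congr rfl fun v _ => ?_
          rw [Finset.offDiag_card]
          have : ∀ k : ℕ, k * (k - 1) = k * k - k := by
            intro k; cases k with
            | zero => rfl
            | succ k =>
              simp only [Nat.add_sub_cancel]
              symm; apply Nat.sub_eq_of_eq_add; ring
          rw [this]
      _ = (Finset.univ.biUnion
            (fun v => (S.filter (fun e => e.1 v = true)).offDiag)).card :=
          (Finset.card_biUnion hdisj).symm
      _ ≤ A.card := by
          apply Finset.card_le_card
          intro p hp
          rw [Finset.mem_biUnion] at hp
          obtain ⟨v, _, hp⟩ := hp
          rw [Finset.mem_offDiag] at hp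
          obtain ⟨h1, h2, hne⟩ := hp
          simp only [Finset.mem_filter] at h1 h2
          rw [hA, Finset.mem_filter, Finset.mem_product]
          exact ⟨⟨h1.1, h2.1⟩, (johnson_adj _ _).2 ⟨hne, v, h1.2, h2.2⟩⟩
  have h2b : A.card ≤ 2 * P.card := by
    have hsub : A ⊆ P ∪ P.image Prod.swap := by
      rintro ⟨p1, p2⟩ hp
      rw [hA, Finset.mem_filter, Finset.mem_product] at hp
      obtain ⟨⟨hs1, hs2⟩, hadj⟩ := hp
      rcases Λ.total _ _ hadj with h | h
      · exact Finset.mem_union_left _ (by rw [hP, Finset.mem_filter, Finset.mem_product]; exact ⟨⟨hs1, hs2⟩, h⟩)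
      · refine Finset.mem_union_right _ ?_
        rw [Finset.mem_image]
        exact ⟨(p2, p1), by rw [hP, Finset.mem_filter, Finset.mem_product]; exact ⟨⟨hs2, hs1⟩, h⟩, rfl⟩
    calc A.card ≤ (P ∪ P.image Prod.swap).card := Finset.card_le_card hsub
      _ ≤ P.card + (P.image Prod.swap).card := Finset.card_union_le _ _
      _ ≤ P.card + P.card := by
          have := Finset.card_image_le (s := P) (f := Prod.swap)
          omega
      _ = 2 * P.card := (two_mul _).symm
  have h2c : P.card ≤ ∑ e ∈ S, outdeg Λ e := by
    rw [Finset.card_eq_sum_card_fiberwise (f := Prod.fst) (s := P) (t := S)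
      (fun p hp => (Finset.mem_product.1 (Finset.mem_filter.1 hp).1).1)]
    refine Finset.sum_le_sum fun e he => ?_
    have hinj : Set.InjOn Prod.snd (↑(P.filter (fun p => p.1 = e)) : Set (Vtx n × Vtx n)) := by
      rintro ⟨p1, p2⟩ hp ⟨q1, q2⟩ hq h
      simp only [Finset.coe_filter, Set.mem_setOf_eq] at hp hq
      simp only at h
      rw [Prod.ext_iff]
      exact ⟨hp.2.trans hq.2.symm, h⟩
    have himg : (Prod.snd '' (↑(P.filter (fun p => p.1 = e)) : Set (Vtx n × Vtx n))) ⊆ {u | Λ.dir e u} := by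
      rintro u ⟨⟨p1, p2⟩, hp, rfl⟩
      simp only [Finset.coe_filter, Set.mem_setOf_eq, hP, Finset.mem_filter] at hp
      obtain ⟨⟨_, hdir⟩, rfl⟩ := hp
      exact hdir
    unfold outdeg
    rw [← Set.ncard_coe_finset (P.filter (fun p => p.1 = e)),
      ← Set.ncard_image_of_injOn hinj]
    exact Set.ncard_le_ncard himg (Set.toFinite _)
  have houtS : ∑ e ∈ S, outdeg Λ e ≤ W * m := by
    calc ∑ e ∈ S, outdeg Λ e ≤ ∑ _e ∈ S, W :=
          Finset.sum_le_sum fun e he => (Finset.mem_filter.1 he).2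
      _ = W * m := by rw [Finset.sum_const, smul_eq_mul, mul_comm]
  have key : ∑ v, d v * (d v - 1) ≤ 2 * (W * m) := by
    calc ∑ v, d v * (d v - 1) ≤ A.card := h2a
      _ ≤ 2 * P.card := h2b
      _ ≤ 2 * (W * m) := by
          have := le_trans h2c houtS
          omega
  have hcs : (∑ v, d v) ^ 2 ≤ n * ∑ v, (d v) ^ 2 := by
    have := sq_sum_le_card_mul_sum_sq (s := (Finset.univ : Finset (Fin n))) (f := d)
    simpa using this
  have hsq : ∑ v, (d v) ^ 2 ≤ (∑ v, d v * (d v - 1)) + ∑ v, d v := by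
    rw [← Finset.sum_add_distrib]
    refine Finset.sum_le_sum fun v _ => ?_
    rcases Nat.eq_zero_or_pos (d v) with h | h
    · simp [h]
    · obtain ⟨k, hk⟩ : ∃ k, d v = k + 1 := ⟨d v - 1, by omega⟩
      exact le_of_eq (by rw [hk]; simp only [Nat.add_sub_cancel]; ring)
  rcases Nat.eq_zero_or_pos m with hm0 | hm0
  · simp [hm0]
  have final : (2 * m) * (2 * m) ≤ (2 * m) * ((W + 1) * n) := by
    calc (2 * m) * (2 * m) = (∑ v, d v) ^ 2 := by rw [hsumd]; ring
      _ ≤ n * ∑ v, (d v) ^ 2 := hcs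
      _ ≤ n * ((∑ v, d v * (d v - 1)) + ∑ v, d v) := by
          exact Nat.mul_le_mul_left n hsq
      _ ≤ n * (2 * (W * m) + 2 * m) := by
          apply Nat.mul_le_mul_left
          rw [hsumd]
          omega
      _ = (2 * m) * ((W + 1) * n) := by ring
  have := Nat.le_of_mul_le_mul_left final (by omega : 0 < 2 * m)
  omega
/- ### construction -/

def KK (n W : ℕ) : ℕ := min (W + 1) (n - 1)
def tt (n W : ℕ) : ℕ := KK n W / 2
def hh (n : ℕ) : ℕ := n / 2
def dd (n a b : ℕ) : ℕ := if a ≤ b then b - a else b + n - a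
def isM (n a b : ℕ) : Prop := (a < hh n ∧ b = a + hh n) ∨ (b < hh n ∧ a = b + hh n)

instance (n a b : ℕ) : Decidable (isM n a b) := by unfold isM; infer_instance

noncomputable def pri (n W a b : ℕ) : ℕ :=
  if 1 ≤ dd n a b ∧ dd n a b ≤ tt n W then dd n a b - 1
  else if 1 ≤ dd n b a ∧ dd n b a ≤ tt n W then KK n W - dd n b a
  else if KK n W % 2 = 1 ∧ isM n a b then tt n W
  else W + 1 + b

def good (n W a b : ℕ) : Prop :=
  (1 ≤ dd n a b ∧ dd n a b ≤ tt n W) ∨ (1 ≤ dd n b a ∧ dd n b a ≤ tt n W) ∨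
    (KK n W % 2 = 1 ∧ isM n a b)

lemma dd_pos {n a b : ℕ} (ha : a < n) (hb : b < n) (hab : a ≠ b) :
    1 ≤ dd n a b ∧ dd n a b ≤ n - 1 := by
  unfold dd; split <;> omega

lemma dd_add {n a b : ℕ} (ha : a < n) (hb : b < n) (hab : a ≠ b) :
    dd n a b + dd n b a = n := by
  unfold dd; split_ifs <;> omega

lemma dd_inj {n a b c : ℕ} (ha : a < n) (hb : b < n) (hc : c < n)
    (h : dd n a b = dd n a c) : b = c := by
  unfold dd at h; split_ifs at h <;> omega

lemma pri_inj {n W a b c : ℕ} (ha : a < n) (hb : b < n) (hc : c < n)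
    (hba : b ≠ a) (hca : c ≠ a) (hbc : b ≠ c) : pri n W a b ≠ pri n W a c := by
  have h1 : dd n a b ≠ dd n a c := fun h => hbc (dd_inj ha hb hc h)
  have h2 : dd n b a ≠ dd n c a := by
    intro h
    apply h1
    have e1 := dd_add ha hb (fun h' => hba h'.symm)
    have e2 := dd_add ha hc (fun h' => hca h'.symm)
    omega
  have p1 := dd_pos ha hb (fun h' => hba h'.symm)
  have p2 := dd_pos ha hc (fun h' => hca h'.symm)
  have p3 := dd_pos hb ha hba
  have p4 := dd_pos hc ha hca
  have e1 := dd_add ha hb (fun h' => hba h'.symm)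
  have e2 := dd_add ha hc (fun h' => hca h'.symm)
  have hK1 : KK n W ≤ W + 1 := min_le_left _ _
  have hK2 : KK n W ≤ n - 1 := min_le_right _ _
  have hK3 : KK n W = W + 1 ∨ KK n W = n - 1 := min_choice _ _
  rw [pri, pri]
  split_ifs <;> simp only [isM, tt, hh] at * <;> omega

lemma pri_sum {n W a b : ℕ} (ha : a < n) (hb : b < n) (hab : a ≠ b) (hg : good n W a b) :
    pri n W a b + pri n W b a ≤ W := by
  have p1 := dd_pos ha hb hab
  have p2 := dd_pos hb ha (Ne.symm hab)
  have e1 := dd_add ha hb hab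
  simp only [good, isM, tt, hh] at hg
  have hK1 : KK n W ≤ W + 1 := min_le_left _ _
  have hK2 : KK n W ≤ n - 1 := min_le_right _ _
  have hK3 : KK n W = W + 1 ∨ KK n W = n - 1 := min_choice _ _
  rw [pri, pri]
  split_ifs <;> simp only [isM, tt, hh] at * <;> omega

def oth {n : ℕ} (v : Fin n) (e : Vtx n) : ℕ :=
  ∑ i ∈ (Finset.univ.filter (fun i => e.1 i = true)).erase v, i.val

lemma oth_spec {n : ℕ} {v u : Fin n} {e : Vtx n} (hv : e.1 v = true) (hu : e.1 u = true)
    (huv : u ≠ v) : oth v e = u.val := by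
  have hv' : v ∈ Finset.univ.filter (fun i => e.1 i = true) := by simp [hv]
  have h1 : ({u} : Finset (Fin n)) ⊆ (Finset.univ.filter (fun i => e.1 i = true)).erase v := by
    simp [Finset.singleton_subset_iff, Finset.mem_erase, huv, hu]
  have h2 : ((Finset.univ.filter (fun i => e.1 i = true)).erase v).card = 1 := by
    rw [Finset.card_erase_of_mem hv']
    have : (Finset.univ.filter (fun i => e.1 i = true)).card = 2 := e.2
    omega
  have := Finset.eq_of_subset_of_card_le h1 (by rw [h2]; simp)
  unfold oth
  rw [← this]
  simp

lemma exists_oth {n : ℕ} {v : Fin n} {e : Vtx n} (hv : e.1 v = true) :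
    ∃ u : Fin n, u ≠ v ∧ e.1 u = true ∧ oth v e = u.val := by
  obtain ⟨x, y, hxy, hchar⟩ := exists_pair e
  rcases (hchar v).1 hv with h | h
  · subst h
    exact ⟨y, hxy.symm, (hchar y).2 (Or.inr rfl), oth_spec hv ((hchar y).2 (Or.inr rfl)) hxy.symm⟩
  · subst h
    exact ⟨x, hxy, (hchar x).2 (Or.inl rfl), oth_spec hv ((hchar x).2 (Or.inl rfl)) hxy⟩

/-- the orientation used for the lower bound -/
noncomputable def Lam (n W : ℕ) : GraphOrientation (johnson n 2) where
  dir e f := (johnson n 2).Adj e f ∧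
    ∃ v : Fin n, e.1 v = true ∧ f.1 v = true ∧
      pri n W v.val (oth v f) < pri n W v.val (oth v e)
  dir_adj := fun u v h => h.1
  total := by
    intro e f hadj
    obtain ⟨hne, v, hev, hfv⟩ := (johnson_adj e f).1 hadj
    obtain ⟨u, huv, hu, hothe⟩ := exists_oth hev
    obtain ⟨w, hwv, hw, hothf⟩ := exists_oth hfv
    have huw : u ≠ w := fun h =>
      hne (pair_uniq e f huv hu hev (by rw [h]; exact hw) hfv)
    have hne' : pri n W v.val (oth v e) ≠ pri n W v.val (oth v f) := by
      rw [hothe, hothf]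
      exact pri_inj v.isLt u.isLt w.isLt (fun h => huv (Fin.ext h))
        (fun h => hwv (Fin.ext h)) (fun h => huw (Fin.ext h))
    rcases lt_or_gt_of_ne hne' with h | h
    · exact Or.inr ⟨(johnson n 2).adj_symm hadj, v, hfv, hev, h⟩
    · exact Or.inl ⟨hadj, v, hev, hfv, h⟩
  asymm := by
    rintro e f ⟨hadj, v, hev, hfv, hlt⟩ ⟨hadj', v', hfv', hev', hlt'⟩
    have hne : e ≠ f := (johnson n 2).ne_of_adj hadj
    rcases eq_or_ne v v' with rfl | hvv
    · exact absurd hlt' (lt_asymm hlt)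
    · exact hne (pair_uniq e f hvv hev hev' hfv hfv')
/- ### outdegree bound for Lam -/

lemma card_pri_lt (n W : ℕ) (a : Fin n) (bound : ℕ) :
    {f : Vtx n | f.1 a = true ∧ pri n W a.val (oth a f) < bound}.ncard ≤ bound := by
  classical
  have hinj : Set.InjOn (fun f : Vtx n => pri n W a.val (oth a f))
      {f : Vtx n | f.1 a = true ∧ pri n W a.val (oth a f) < bound} := by
    intro f hf g hg hEq
    by_contra hfg
    obtain ⟨u, hua, hu, hothf⟩ := exists_oth hf.1
    obtain ⟨w, hwa, hw, hothg⟩ := exists_oth hg.1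
    have huw : u ≠ w := fun h =>
      hfg (pair_uniq f g hua hu hf.1 (by rw [h]; exact hw) hg.1)
    simp only at hEq
    rw [hothf, hothg] at hEq
    exact pri_inj a.isLt u.isLt w.isLt (fun h => hua (Fin.ext h))
      (fun h => hwa (Fin.ext h)) (fun h => huw (Fin.ext h)) hEq
  calc {f : Vtx n | f.1 a = true ∧ pri n W a.val (oth a f) < bound}.ncard
      = ((fun f : Vtx n => pri n W a.val (oth a f)) ''
          {f : Vtx n | f.1 a = true ∧ pri n W a.val (oth a f) < bound}).ncard :=
        (Set.ncard_image_of_injOn hinj).symm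
    _ ≤ (↑(Finset.range bound) : Set ℕ).ncard := by
        apply Set.ncard_le_ncard ?_ (Set.toFinite _)
        rintro x ⟨f, hf, rfl⟩
        simp only [Finset.coe_range, Set.mem_Iio]
        exact hf.2
    _ = bound := by rw [Set.ncard_coe_finset, Finset.card_range]

lemma outdeg_Lam_le {n W : ℕ} {e : Vtx n} {a b : Fin n} (hab : a ≠ b)
    (hea : e.1 a = true) (heb : e.1 b = true) (hg : good n W a.val b.val) :
    outdeg (Lam n W) e ≤ W := by
  have hotha : oth a e = b.val := oth_spec hea heb hab.symm
  have hothb : oth b e = a.val := oth_spec heb hea hab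
  have hepf := eq_pf_of e hab hea heb
  have hsub : {f | (Lam n W).dir e f} ⊆
      {f : Vtx n | f.1 a = true ∧ pri n W a.val (oth a f) < pri n W a.val b.val} ∪
      {f : Vtx n | f.1 b = true ∧ pri n W b.val (oth b f) < pri n W b.val a.val} := by
    rintro f ⟨hadj, v, hev, hfv, hlt⟩
    have hv : v = a ∨ v = b := by
      have := hev
      rw [hepf] at this
      rcases (pf_true_iff v).1 this with h | h
      · exact Or.inl (Fin.ext h)
      · exact Or.inr (Fin.ext h)
    rcases hv with rfl | rfl
    · left; exact ⟨hfv, by rwa [hotha] at hlt⟩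
    · right; exact ⟨hfv, by rwa [hothb] at hlt⟩
  calc outdeg (Lam n W) e = {f | (Lam n W).dir e f}.ncard := rfl
    _ ≤ ({f : Vtx n | f.1 a = true ∧ pri n W a.val (oth a f) < pri n W a.val b.val} ∪
        {f : Vtx n | f.1 b = true ∧ pri n W b.val (oth b f) < pri n W b.val a.val}).ncard :=
        Set.ncard_le_ncard hsub (Set.toFinite _)
    _ ≤ {f : Vtx n | f.1 a = true ∧ pri n W a.val (oth a f) < pri n W a.val b.val}.ncard +
        {f : Vtx n | f.1 b = true ∧ pri n W b.val (oth b f) < pri n W b.val a.val}.ncard :=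
        Set.ncard_union_le _ _
    _ ≤ pri n W a.val b.val + pri n W b.val a.val :=
        add_le_add (card_pri_lt n W a _) (card_pri_lt n W b _)
    _ ≤ W := pri_sum a.isLt b.isLt (fun h => hab (Fin.ext h)) hg
/- ### lower bound: counting the light set -/

lemma dd_mod {n u d : ℕ} (hu : u < n) (hd1 : 1 ≤ d) (hd : d < n) :
    dd n u ((u + d) % n) = d := by
  rcases lt_or_ge (u + d) n with h | h
  · rw [Nat.mod_eq_of_lt h]; unfold dd; split <;> omega
  · have h2 : (u + d) % n = u + d - n := by
      rw [Nat.mod_eq_sub_mod h, Nat.mod_eq_of_lt (by omega)]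
    rw [h2]; unfold dd; split <;> omega

lemma pf_inj {n a b c d : ℕ} (ha : a < n) (hb : b < n) (hc : c < n) (hd : d < n)
    (hab : a ≠ b) (hcd : c ≠ d) (h : pf n a b = pf n c d) :
    (a = c ∧ b = d) ∨ (a = d ∧ b = c) := by
  have h1 := congrFun h ⟨a, ha⟩
  have h2 := congrFun h ⟨b, hb⟩
  simp only [pf, decide_eq_decide, true_or, or_true, true_iff, iff_true] at h1 h2
  omega

def e0 (n : ℕ) (hn : 2 ≤ n) : Vtx n :=
  ⟨pf n 0 1, weight_pf (by omega) (by omega) (by omega)⟩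

def tgt (n : ℕ) (p : ℕ × ℕ) : ℕ := if p.2 = 0 then p.1 + hh n else (p.1 + p.2) % n

noncomputable def phi (n W : ℕ) (hn : 2 ≤ n) (p : ℕ × ℕ) : Vtx n :=
  if hp : p.1 < n ∧ tgt n p < n ∧ p.1 ≠ tgt n p then
    ⟨pf n p.1 (tgt n p), weight_pf hp.2.2 hp.1 hp.2.1⟩
  else e0 n hn

def II (n W : ℕ) : Finset (ℕ × ℕ) :=
  (Finset.range n ×ˢ Finset.Icc 1 (tt n W)) ∪
  (Finset.range (if KK n W % 2 = 1 then hh n else 0) ×ˢ {0})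

lemma mem_II_spec {n W : ℕ} {p : ℕ × ℕ} (hn : 2 ≤ n) (hp : p ∈ II n W) :
    p.1 < n ∧ tgt n p < n ∧ p.1 ≠ tgt n p ∧ good n W p.1 (tgt n p) ∧
    dd n p.1 (tgt n p) = (if p.2 = 0 then hh n else p.2) ∧
    (p.2 = 0 → KK n W % 2 = 1 ∧ p.1 < hh n) ∧
    (p.2 ≠ 0 → 1 ≤ p.2 ∧ p.2 ≤ tt n W) := by
  have hK : KK n W ≤ n - 1 := min_le_right _ _
  have ht : tt n W = KK n W / 2 := rfl
  have hhh : hh n = n / 2 := rfl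
  rw [II, Finset.mem_union] at hp
  rcases hp with hp | hp
  · rw [Finset.mem_product, Finset.mem_range, Finset.mem_Icc] at hp
    obtain ⟨h1, h2, h3⟩ := hp
    have hp2 : p.2 ≠ 0 := by omega
    have htgt : tgt n p = (p.1 + p.2) % n := by rw [tgt, if_neg hp2]
    have hdd : dd n p.1 (tgt n p) = p.2 := by
      rw [htgt]; exact dd_mod h1 h2 (by omega)
    have htlt : tgt n p < n := by rw [htgt]; exact Nat.mod_lt _ (by omega)
    have hne : p.1 ≠ tgt n p := by
      intro h
      have : dd n p.1 p.1 = p.2 := by rw [h] at hdd ⊢; exact hdd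
      unfold dd at this; simp at this; omega
    exact ⟨h1, htlt, hne, Or.inl (by omega), by rw [if_neg hp2]; exact hdd,
      fun h => absurd h hp2, fun _ => ⟨h2, h3⟩⟩
  · rw [Finset.mem_product, Finset.mem_range, Finset.mem_singleton] at hp
    obtain ⟨h1, h2⟩ := hp
    have hodd : KK n W % 2 = 1 := by
      by_contra h; rw [if_neg h] at h1; omega
    rw [if_pos hodd] at h1
    have htgt : tgt n p = p.1 + hh n := by rw [tgt, if_pos h2]
    have hbig : p.1 + hh n < n := by omega
    have hne : p.1 ≠ tgt n p := by rw [htgt]; omega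
    have hdd : dd n p.1 (tgt n p) = hh n := by
      rw [htgt]; unfold dd; split <;> omega
    refine ⟨by omega, by omega, hne, ?_, by rw [if_pos h2]; exact hdd,
      fun _ => ⟨hodd, h1⟩, fun h => absurd h2 h⟩
    exact Or.inr (Or.inr ⟨hodd, Or.inl ⟨h1, htgt ▸ rfl⟩⟩)

lemma II_card {n W : ℕ} (hn : 2 ≤ n) : KK n W * n / 2 ≤ (II n W).card := by
  have hdisj : Disjoint (Finset.range n ×ˢ Finset.Icc 1 (tt n W))
      ((Finset.range (if KK n W % 2 = 1 then hh n else 0)) ×ˢ ({0} : Finset ℕ)) := by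
    rw [Finset.disjoint_left]
    rintro ⟨p1, p2⟩ hp hq
    rw [Finset.mem_product, Finset.mem_Icc] at hp
    rw [Finset.mem_product, Finset.mem_singleton] at hq
    simp at hp hq; omega
  rw [II, Finset.card_union_of_disjoint hdisj, Finset.card_product, Finset.card_product,
    Finset.card_range, Nat.card_Icc, Finset.card_range, Finset.card_singleton,
    Nat.add_sub_cancel, mul_one, mul_comm n (tt n W)]
  have hK : KK n W ≤ n - 1 := min_le_right _ _
  rcases Nat.even_or_odd (KK n W) with ⟨k, hk⟩ | ⟨k, hk⟩
  · have h1 : KK n W % 2 ≠ 1 := by omega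
    rw [if_neg h1]
    have ht : tt n W = k := by rw [tt, hk]; omega
    have heq : KK n W * n / 2 = k * n := by
      rw [hk, show (k + k) * n = 2 * (k * n) by ring, Nat.mul_div_cancel_left _ (by norm_num)]
    rw [heq, ht]
    omega
  · have h1 : KK n W % 2 = 1 := by omega
    rw [if_pos h1]
    have ht : tt n W = k := by rw [tt, hk]; omega
    have heq : KK n W * n / 2 = k * n + n / 2 := by
      rw [hk, show (2 * k + 1) * n = n + 2 * (k * n) by ring,
        Nat.add_mul_div_left _ _ (by norm_num : (0:ℕ) < 2)]
      omega
    rw [heq, ht]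
    show k * n + n / 2 ≤ k * n + n / 2
    omega

lemma phi_mem {n W : ℕ} (hn : 2 ≤ n) {p : ℕ × ℕ} (hp : p ∈ II n W) :
    phi n W hn p ∈ Finset.univ.filter (fun e => outdeg (Lam n W) e ≤ W) := by
  obtain ⟨h1, h2, h3, hg, _, _, _⟩ := mem_II_spec hn hp
  rw [Finset.mem_filter]
  refine ⟨Finset.mem_univ _, ?_⟩
  rw [phi, dif_pos ⟨h1, h2, h3⟩]
  exact outdeg_Lam_le (e := ⟨pf n p.1 (tgt n p), _⟩) (a := ⟨p.1, h1⟩) (b := ⟨tgt n p, h2⟩)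
    (by simp [Fin.ext_iff]; exact h3)
    ((pf_true_iff _).2 (Or.inl rfl)) ((pf_true_iff _).2 (Or.inr rfl)) hg

lemma phi_inj {n W : ℕ} (hn : 2 ≤ n) : Set.InjOn (phi n W hn) (II n W) := by
  intro p hp q hq hEq
  obtain ⟨p1, p2, p3, _, p5, p6, p7⟩ := mem_II_spec hn hp
  obtain ⟨q1, q2, q3, _, q5, q6, q7⟩ := mem_II_spec hn hq
  rw [phi, dif_pos ⟨p1, p2, p3⟩, phi, dif_pos ⟨q1, q2, q3⟩] at hEq
  have hpf : pf n p.1 (tgt n p) = pf n q.1 (tgt n q) := congrArg Subtype.val hEq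
  have hK : KK n W ≤ n - 1 := min_le_right _ _
  have ht : tt n W = KK n W / 2 := rfl
  have hhh : hh n = n / 2 := rfl
  rcases pf_inj p1 p2 q1 q2 p3 q3 hpf with ⟨ha, hb⟩ | ⟨ha, hb⟩
  · -- straight case
    have hdd : dd n p.1 (tgt n p) = dd n q.1 (tgt n q) := by rw [ha, hb]
    rw [p5, q5] at hdd
    have : p.2 = q.2 := by
      by_cases hz : p.2 = 0 <;> by_cases hz' : q.2 = 0
      · omega
      · have c1 := p6 hz
        have c2 := q7 hz'
        rw [if_pos hz, if_neg hz'] at hdd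
        omega
      · have c1 := q6 hz'
        have c2 := p7 hz
        rw [if_neg hz, if_pos hz'] at hdd
        omega
      · rw [if_neg hz, if_neg hz'] at hdd
        omega
    exact Prod.ext ha this
  · -- crossed case
    have hne : p.1 ≠ q.1 := by
      intro h; exact p3 (by rw [hb, h])
    have hadd := dd_add p1 q1 hne
    have hd1 : dd n p.1 q.1 = dd n p.1 (tgt n p) := by rw [hb]
    have hd2 : dd n q.1 p.1 = dd n q.1 (tgt n q) := by rw [ha]
    rw [p5] at hd1; rw [q5] at hd2
    by_cases hz : p.2 = 0 <;> by_cases hz' : q.2 = 0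
    · obtain ⟨c1, c2⟩ := p6 hz
      obtain ⟨c3, c4⟩ := q6 hz'
      rw [if_pos hz] at hd1; rw [if_pos hz'] at hd2
      -- p.1 = tgt q = q.1 + hh n ≥ hh n, but p.1 < hh n
      have : tgt n q = q.1 + hh n := by rw [tgt, if_pos hz']
      omega
    · obtain ⟨c1, c2⟩ := p6 hz
      obtain ⟨c3, c4⟩ := q7 hz'
      rw [if_pos hz] at hd1; rw [if_neg hz'] at hd2
      omega
    · obtain ⟨c1, c2⟩ := p7 hz
      obtain ⟨c3, c4⟩ := q6 hz'
      rw [if_neg hz] at hd1; rw [if_pos hz'] at hd2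
      omega
    · obtain ⟨c1, c2⟩ := p7 hz
      obtain ⟨c3, c4⟩ := q7 hz'
      rw [if_neg hz] at hd1; rw [if_neg hz'] at hd2
      omega

lemma lower_bound (n W : ℕ) (hn : 2 ≤ n) :
    KK n W * n / 2 ≤ {B | outdeg (Lam n W) B ≤ W}.ncard := by
  classical
  have hset : {B | outdeg (Lam n W) B ≤ W} =
      ↑(Finset.univ.filter (fun e => outdeg (Lam n W) e ≤ W)) := by
    ext e; simp
  rw [hset, Set.ncard_coe_finset]
  calc KK n W * n / 2 ≤ (II n W).card := II_card hn
    _ ≤ (Finset.univ.filter (fun e => outdeg (Lam n W) e ≤ W)).card :=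
        Finset.card_le_card_of_injOn (phi n W hn) (fun p hp => phi_mem hn hp) (phi_inj hn)
/- ### assembly -/

lemma min_eq_KK (n W : ℕ) : min ((W + 1) * n / 2) (n.choose 2) = KK n W * n / 2 := by
  rw [Nat.choose_two_right]
  rcases le_total (W + 1) (n - 1) with h | h
  · rw [show KK n W = W + 1 from min_eq_left h]
    refine min_eq_left ?_
    apply Nat.div_le_div_right
    calc (W + 1) * n ≤ (n - 1) * n := Nat.mul_le_mul_right n h
      _ = n * (n - 1) := mul_comm _ _
  · rw [show KK n W = n - 1 from min_eq_right h, mul_comm (n - 1) n]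
    refine min_eq_right ?_
    apply Nat.div_le_div_right
    calc n * (n - 1) ≤ n * (W + 1) := Nat.mul_le_mul_left n h
      _ = (W + 1) * n := mul_comm _ _

theorem stmt8 (W n : ℕ) : Lmax W n 2 = min ((W + 1) * n / 2) (n.choose 2) := by
  classical
  unfold Lmax
  rcases lt_or_ge n 2 with hn | hn
  · -- degenerate case: no vertices
    have hV : IsEmpty (Vtx n) := by
      constructor
      rintro ⟨B, hB⟩
      have h1 : (Finset.univ.filter (fun i => B i = true)).card ≤ n :=
        le_trans (Finset.card_le_card (Finset.filter_subset _ _)) (by simp)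
      have h2 : (Finset.univ.filter (fun i => B i = true)).card = 2 := hB
      omega
    have hzero : ∀ Λ : GraphOrientation (johnson n 2), {B | outdeg Λ B ≤ W}.ncard = 0 := by
      intro Λ
      rw [Set.eq_empty_of_isEmpty {B | outdeg Λ B ≤ W}, Set.ncard_empty]
    have hone : {k | ∃ Λ : GraphOrientation (johnson n 2), k = {B | outdeg Λ B ≤ W}.ncard}
        = {0} := by
      ext k
      simp only [Set.mem_setOf_eq, Set.mem_singleton_iff]
      constructor
      · rintro ⟨Λ, rfl⟩; exact hzero Λ
      · rintro rfl
        exact ⟨⟨fun _ _ => False, fun u v h => h.elim, fun u v _ => (hV.false u).elim,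
          fun u v h => h.elim⟩, (hzero _).symm⟩
    rw [hone, csSup_singleton]
    have hch : n.choose 2 = 0 := Nat.choose_eq_zero_of_lt hn
    omega
  · have hmin := min_eq_KK n W
    have hub : ∀ k ∈ {k | ∃ Λ : GraphOrientation (johnson n 2),
        k = {B | outdeg Λ B ≤ W}.ncard}, k ≤ KK n W * n / 2 := by
      rintro k ⟨Λ, rfl⟩
      rw [← hmin]
      refine le_min ?_ (upper_choose Λ)
      rw [Nat.le_div_iff_mul_le (by norm_num : 0 < 2)]
      exact upper_main Λ
    have hmem : KK n W * n / 2 ∈ {k | ∃ Λ : GraphOrientation (johnson n 2),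
        k = {B | outdeg Λ B ≤ W}.ncard} := by
      have hl := lower_bound n W hn
      have hu : {B | outdeg (Lam n W) B ≤ W}.ncard ≤ KK n W * n / 2 :=
        hub _ ⟨Lam n W, rfl⟩
      exact ⟨Lam n W, (le_antisymm hu hl).symm⟩
    rw [hmin]
    exact le_antisymm (csSup_le ⟨_, hmem⟩ hub) (le_csSup ⟨KK n W * n / 2, hub⟩ hmem)
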